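/- Let N ≥ 2 be an integer, p > N, α > 0, a₁ > 0, and let f : ℝ → ℝ be continuous with 0 ≤ t·f(t) ≤ a₁|t|^p · φ_N(α|t|^{N/(N−1)}) for all t ∈ ℝ. Let f_k be the Strauss approximation of f. Then for every k ∈ ℕ and every s with |s| ≤ 1/k, one has 0 ≤ s·f_k(s) ≤ a₁·2^{p−1}·exp(2^{N/(N−1)} α)·k^{−(p−2)}·|s|². -/

import Mathlib

/-- φ_N(t) = e^t − Σ_{j=0}^{N−2} t^j/j! -/
noncomputable def phiN (N : ℕ) (t : ℝ) : ℝ :=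
  Real.exp t - ∑ j ∈ Finset.range (N - 1), t ^ j / (Nat.factorial j : ℝ)

/-- G(s) = ∫₀^s f(ξ) dξ -/
noncomputable def Gfun (f : ℝ → ℝ) (s : ℝ) : ℝ := ∫ ξ in (0:ℝ)..s, f ξ

/-- The Strauss approximation f_k of f, defined piecewise via G = Gfun f. -/
noncomputable def strauss (f : ℝ → ℝ) (k : ℕ) (s : ℝ) : ℝ :=
  let G := Gfun f
  if s ≤ -(k:ℝ) then -(k:ℝ) * (G (-(k:ℝ) - 1/(k:ℝ)) - G (-(k:ℝ)))
  else if s ≤ -(1/(k:ℝ)) then -(k:ℝ) * (G (s - 1/(k:ℝ)) - G s)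
  else if s ≤ 0 then (k:ℝ)^2 * s * (G (-(2/(k:ℝ))) - G (-(1/(k:ℝ))))
  else if s ≤ 1/(k:ℝ) then (k:ℝ)^2 * s * (G (2/(k:ℝ)) - G (1/(k:ℝ)))
  else if s ≤ (k:ℝ) then (k:ℝ) * (G (s + 1/(k:ℝ)) - G s)
  else (k:ℝ) * (G ((k:ℝ) + 1/(k:ℝ)) - G (k:ℝ))

/-- Unfolding lemma for `strauss` (avoids heavy `unfold`). -/
theorem strauss_eq (f : ℝ → ℝ) (k : ℕ) (s : ℝ) :
    strauss f k s =
  if s ≤ -(k:ℝ) then -(k:ℝ) * (Gfun f (-(k:ℝ) - 1/(k:ℝ)) - Gfun f (-(k:ℝ)))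
  else if s ≤ -(1/(k:ℝ)) then -(k:ℝ) * (Gfun f (s - 1/(k:ℝ)) - Gfun f s)
  else if s ≤ 0 then (k:ℝ)^2 * s * (Gfun f (-(2/(k:ℝ))) - Gfun f (-(1/(k:ℝ))))
  else if s ≤ 1/(k:ℝ) then (k:ℝ)^2 * s * (Gfun f (2/(k:ℝ)) - Gfun f (1/(k:ℝ)))
  else if s ≤ (k:ℝ) then (k:ℝ) * (Gfun f (s + 1/(k:ℝ)) - Gfun f s)
  else (k:ℝ) * (Gfun f ((k:ℝ) + 1/(k:ℝ)) - Gfun f (k:ℝ)) := rfl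

set_option maxHeartbeats 1600000 in
/-- estimate for s·f_k(s) when |s| ≤ 1/k. -/
theorem stmt_9 (N : ℕ) (hN : 2 ≤ N) (p α a₁ : ℝ) (hp : (N:ℝ) < p) (hα : 0 < α)
    (ha₁ : 0 < a₁) (f : ℝ → ℝ) (hf : Continuous f)
    (hgrowth : ∀ t : ℝ, 0 ≤ t * f t ∧
      t * f t ≤ a₁ * |t| ^ p * phiN N (α * |t| ^ ((N:ℝ)/((N:ℝ)-1))))
    (k : ℕ) (hk : 0 < k) :
    ∀ s : ℝ, |s| ≤ 1/(k:ℝ) →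
      0 ≤ s * strauss f k s ∧
      s * strauss f k s ≤
        a₁ * 2 ^ (p - 1) * Real.exp ((2:ℝ) ^ ((N:ℝ)/((N:ℝ)-1)) * α) *
          ((k:ℝ) ^ (p - 2))⁻¹ * s ^ 2 := by
  intro s hs
  have h2N : (2:ℝ) ≤ (N:ℝ) := by exact_mod_cast hN
  have hkR : (0:ℝ) < (k:ℝ) := by exact_mod_cast hk
  have hk1 : (1:ℝ) ≤ (k:ℝ) := by exact_mod_cast hk
  set q : ℝ := (N:ℝ)/((N:ℝ)-1) with hqdef
  have hq0 : 0 ≤ q := div_nonneg (by linarith) (by linarith)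
  have hp1 : 0 ≤ p - 1 := by linarith
  set E : ℝ := Real.exp ((2:ℝ) ^ q * α) with hE
  have hE0 : 0 < E := Real.exp_pos _
  set C : ℝ := a₁ * (2 / (k:ℝ)) ^ (p-1) * E with hCdef
  have hC0 : 0 ≤ C := by positivity
  -- phiN is bounded by exp
  have hphi : ∀ x : ℝ, 0 ≤ x → phiN N x ≤ Real.exp x := by
    intro x hx
    have hsum : 0 ≤ ∑ j ∈ Finset.range (N - 1), x ^ j / (Nat.factorial j : ℝ) := by
      apply Finset.sum_nonneg
      intro j _
      positivity
    simp only [phiN]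
    linarith
  -- key pointwise bound
  have hkey : ∀ u : ℝ, u ∈ Set.Icc (1/(k:ℝ)) (2/(k:ℝ)) → ∀ y : ℝ,
      u * y ≤ a₁ * u ^ p * phiN N (α * u ^ q) → y ≤ C := by
    intro u hu y hy
    obtain ⟨hu1, hu2⟩ := hu
    have hu0 : 0 < u := lt_of_lt_of_le (by positivity) hu1
    have hu2' : u ≤ 2 := le_trans hu2 (div_le_self (by norm_num) hk1)
    have hphit : phiN N (α * u ^ q) ≤ Real.exp (α * u ^ q) :=
      hphi _ (by positivity)
    have h2 : u * y ≤ a₁ * u ^ p * Real.exp (α * u ^ q) := by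
      calc u * y ≤ a₁ * u ^ p * phiN N (α * u ^ q) := hy
        _ ≤ a₁ * u ^ p * Real.exp (α * u ^ q) := by
            apply mul_le_mul_of_nonneg_left hphit (by positivity)
    have h3 : y ≤ a₁ * u ^ (p-1) * Real.exp (α * u ^ q) := by
      have h4 : y ≤ (a₁ * u ^ p * Real.exp (α * u ^ q)) / u := by
        rw [le_div_iff₀ hu0]
        nlinarith [h2]
      calc y ≤ _ := h4
        _ = a₁ * u ^ (p-1) * Real.exp (α * u ^ q) := by
            rw [Real.rpow_sub hu0, Real.rpow_one]; ring
    have hA : u ^ (p-1) ≤ (2/(k:ℝ)) ^ (p-1) := Real.rpow_le_rpow hu0.le hu2 hp1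
    have hB : Real.exp (α * u ^ q) ≤ E := by
      rw [hE]
      apply Real.exp_le_exp.2
      have huq : u ^ q ≤ (2:ℝ) ^ q := Real.rpow_le_rpow hu0.le hu2' hq0
      nlinarith [hα.le]
    calc y ≤ a₁ * u ^ (p-1) * Real.exp (α * u ^ q) := h3
      _ ≤ a₁ * (2/(k:ℝ)) ^ (p-1) * E := by
          apply mul_le_mul (mul_le_mul_of_nonneg_left hA ha₁.le) hB
            (Real.exp_pos _).le (by positivity)
      _ = C := rfl
  -- bounds on f on the two intervals
  have hub : ∀ t ∈ Set.Icc (1/(k:ℝ)) (2/(k:ℝ)), f t ≤ C := by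
    intro t ht
    have ht0 : 0 < t := lt_of_lt_of_le (by positivity) ht.1
    have h1 := (hgrowth t).2
    rw [abs_of_pos ht0] at h1
    exact hkey t ht (f t) h1
  have hub0 : ∀ t ∈ Set.Icc (1/(k:ℝ)) (2/(k:ℝ)), 0 ≤ f t := by
    intro t ht
    have ht0 : 0 < t := lt_of_lt_of_le (by positivity) ht.1
    have h1 := (hgrowth t).1
    nlinarith
  have hlb : ∀ t ∈ Set.Icc (-(2/(k:ℝ))) (-(1/(k:ℝ))), -C ≤ f t := by
    intro t ht
    have hk0' : (0:ℝ) < 1/(k:ℝ) := by positivity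
    have htneg : t < 0 := lt_of_le_of_lt ht.2 (by linarith)
    have h1 := (hgrowth t).2
    rw [abs_of_neg htneg] at h1
    have hmem : -t ∈ Set.Icc (1/(k:ℝ)) (2/(k:ℝ)) := ⟨by linarith [ht.2], by linarith [ht.1]⟩
    have h2 : (-t) * (-(f t)) ≤ a₁ * (-t) ^ p * phiN N (α * (-t) ^ q) := by
      nlinarith [h1]
    have := hkey (-t) hmem (-(f t)) h2
    linarith
  have hlb0 : ∀ t ∈ Set.Icc (-(2/(k:ℝ))) (-(1/(k:ℝ))), f t ≤ 0 := by
    intro t ht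
    have hk0' : (0:ℝ) < 1/(k:ℝ) := by positivity
    have htneg : t < 0 := lt_of_le_of_lt ht.2 (by linarith)
    have h1 := (hgrowth t).1
    nlinarith
  -- integrability
  have hint : ∀ a b : ℝ, IntervalIntegrable f MeasureTheory.volume a b :=
    fun a b => hf.intervalIntegrable a b
  have hle : (1/(k:ℝ)) ≤ 2/(k:ℝ) := by
    rw [div_le_div_iff₀ hkR hkR]; nlinarith
  -- value of the G-differences as interval integrals
  have hGpos : Gfun f (2/(k:ℝ)) - Gfun f (1/(k:ℝ))
      = ∫ t in (1/(k:ℝ))..(2/(k:ℝ)), f t := by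
    have h := intervalIntegral.integral_add_adjacent_intervals
      (hint 0 (1/(k:ℝ))) (hint (1/(k:ℝ)) (2/(k:ℝ)))
    simp only [Gfun]
    linarith
  have hGneg : Gfun f (-(2/(k:ℝ))) - Gfun f (-(1/(k:ℝ)))
      = - ∫ t in (-(2/(k:ℝ)))..(-(1/(k:ℝ))), f t := by
    have h := intervalIntegral.integral_add_adjacent_intervals
      (hint 0 (-(1/(k:ℝ)))) (hint (-(1/(k:ℝ))) (-(2/(k:ℝ))))
    have h2 := intervalIntegral.integral_symm (f := f) (μ := MeasureTheory.volume)
      (-(2/(k:ℝ))) (-(1/(k:ℝ)))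
    simp only [Gfun]
    linarith
  have hleneg : (-(2/(k:ℝ))) ≤ -(1/(k:ℝ)) := by linarith
  -- integral bounds
  have hIpos_ub : (∫ t in (1/(k:ℝ))..(2/(k:ℝ)), f t) ≤ (1/(k:ℝ)) * C := by
    have h := intervalIntegral.integral_mono_on hle (hint _ _)
      (intervalIntegrable_const (c := C)) hub
    rw [intervalIntegral.integral_const, smul_eq_mul] at h
    have heq : (2/(k:ℝ) - 1/(k:ℝ)) * C = (1/(k:ℝ)) * C := by ring
    linarith
  have hIpos_lb : 0 ≤ ∫ t in (1/(k:ℝ))..(2/(k:ℝ)), f t :=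
    intervalIntegral.integral_nonneg hle hub0
  have hIneg_lb : -((1/(k:ℝ)) * C) ≤ ∫ t in (-(2/(k:ℝ)))..(-(1/(k:ℝ))), f t := by
    have h := intervalIntegral.integral_mono_on hleneg
      (intervalIntegrable_const (c := -C)) (hint _ _) hlb
    rw [intervalIntegral.integral_const, smul_eq_mul] at h
    have heq : ((-(1/(k:ℝ))) - (-(2/(k:ℝ)))) * (-C) = -((1/(k:ℝ)) * C) := by ring
    linarith
  have hIneg_ub : (∫ t in (-(2/(k:ℝ)))..(-(1/(k:ℝ))), f t) ≤ 0 := by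
    have h := intervalIntegral.integral_mono_on hleneg (hint _ _)
      (intervalIntegrable_const (c := (0:ℝ))) hlb0
    rw [intervalIntegral.integral_const, smul_eq_mul, mul_zero] at h
    exact h
  -- coefficient identity
  have hkp2 : (0:ℝ) < (k:ℝ) ^ (p-2) := Real.rpow_pos_of_pos hkR _
  have hkp1 : ((k:ℝ)) ^ (p-1) = (k:ℝ) ^ (p-2) * (k:ℝ) := by
    rw [show p-1 = (p-2)+1 by ring, Real.rpow_add hkR, Real.rpow_one]
  have hcoef : (k:ℝ)^2 * ((1/(k:ℝ)) * C)
      = a₁ * 2 ^ (p - 1) * E * (((k:ℝ)) ^ (p - 2))⁻¹ := by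
    rw [hCdef, Real.div_rpow (by norm_num : (0:ℝ) ≤ 2) hkR.le, hkp1]
    field_simp
  have h1k : 1/(k:ℝ) ≤ (k:ℝ) := by
    rw [div_le_iff₀ hkR]
    have h := mul_le_mul hk1 hk1 zero_le_one hkR.le
    linarith
  rcases le_or_gt s 0 with hs0 | hs0
  · -- nonpositive s
    have hs1 : -(1/(k:ℝ)) ≤ s := by
      have := abs_le.1 hs
      linarith [this.1]
    have hval : strauss f k s
        = (k:ℝ)^2 * s * (Gfun f (-(2/(k:ℝ))) - Gfun f (-(1/(k:ℝ)))) := by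
      rw [strauss_eq]
      rcases eq_or_lt_of_le hs1 with heq | hlt
      · rcases le_or_gt s (-(k:ℝ)) with h1 | h1
        · -- forces k = 1, s = -1
          have h5 : (k:ℝ) ≤ 1/(k:ℝ) := by linarith
          have h6 : (k:ℝ) * (k:ℝ) ≤ 1 := by
            rw [le_div_iff₀ hkR] at h5; linarith
          have hkk : (k:ℝ) = 1 := le_antisymm (by nlinarith) hk1
          have hseq : s = -1 := by rw [← heq, hkk]; norm_num
          rw [if_pos h1, hkk, hseq]
          norm_num
        · rw [if_neg (not_le.2 h1), if_pos (le_of_eq heq.symm), ← heq]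
          field_simp
          ring
      · have hn1 : ¬ s ≤ -(1/(k:ℝ)) := not_le.2 hlt
        have hnk : ¬ s ≤ -(k:ℝ) := by
          intro h
          linarith
        rw [if_neg hnk, if_neg hn1, if_pos hs0]
    set D : ℝ := Gfun f (-(2/(k:ℝ))) - Gfun f (-(1/(k:ℝ))) with hD
    have hD0 : 0 ≤ D := by rw [hGneg]; linarith
    have hDub : D ≤ (1/(k:ℝ)) * C := by rw [hGneg]; linarith
    rw [hval]
    constructor
    · have heq : s * ((k:ℝ)^2 * s * D) = ((k:ℝ)^2 * s^2) * D := by ring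
      rw [heq]
      exact mul_nonneg (by positivity) hD0
    · calc s * ((k:ℝ)^2 * s * D) = ((k:ℝ)^2 * s^2) * D := by ring
        _ ≤ ((k:ℝ)^2 * s^2) * ((1/(k:ℝ)) * C) :=
            mul_le_mul_of_nonneg_left hDub (by positivity)
        _ = ((k:ℝ)^2 * ((1/(k:ℝ)) * C)) * s^2 := by ring
        _ = a₁ * 2 ^ (p - 1) * E * (((k:ℝ)) ^ (p - 2))⁻¹ * s^2 := by rw [hcoef]
  · -- positive s
    have hs1 : s ≤ 1/(k:ℝ) := by
      have := abs_le.1 hs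
      linarith [this.2]
    have hk0' : (0:ℝ) < 1/(k:ℝ) := by positivity
    have hval : strauss f k s
        = (k:ℝ)^2 * s * (Gfun f (2/(k:ℝ)) - Gfun f (1/(k:ℝ))) := by
      rw [strauss_eq]
      have hnk : ¬ s ≤ -(k:ℝ) := by intro h; linarith
      have hn1 : ¬ s ≤ -(1/(k:ℝ)) := by intro h; linarith
      have hn0 : ¬ s ≤ 0 := not_le.2 hs0
      rw [if_neg hnk, if_neg hn1, if_neg hn0, if_pos hs1]
    set D : ℝ := Gfun f (2/(k:ℝ)) - Gfun f (1/(k:ℝ)) with hD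
    have hD0 : 0 ≤ D := by rw [hGpos]; linarith
    have hDub : D ≤ (1/(k:ℝ)) * C := by rw [hGpos]; linarith
    rw [hval]
    constructor
    · have heq : s * ((k:ℝ)^2 * s * D) = ((k:ℝ)^2 * s^2) * D := by ring
      rw [heq]
      exact mul_nonneg (by positivity) hD0
    · calc s * ((k:ℝ)^2 * s * D) = ((k:ℝ)^2 * s^2) * D := by ring
        _ ≤ ((k:ℝ)^2 * s^2) * ((1/(k:ℝ)) * C) :=
            mul_le_mul_of_nonneg_left hDub (by positivity)
        _ = ((k:ℝ)^2 * ((1/(k:ℝ)) * C)) * s^2 := by ring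
        _ = a₁ * 2 ^ (p - 1) * E * (((k:ℝ)) ^ (p - 2))⁻¹ * s^2 := by rw [hcoef]
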